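/- The k × (2k+1) matrix M over a field K whose j-th row (j = 1,...,k) is the gradient of f_j = s_{j+1} t_j − s_j t_{j-1} with respect to the variables (s_1, ..., s_{k+1}, t_0, ..., t_k), evaluated at a point where the relations f_j = 0 hold and where there exists l with s_j ≠ 0 for j ≤ l−1 and t_j ≠ 0 for j ≥ l (and no s_j, t_j simultaneously zero), has rank exactly k. -/

import Mathlib

/-- The Jacobian matrix of `f_j = s_{j+1} t_j − s_j t_{j-1}` (`j = 1,…,k`) with respect to
the variables `(s_1, …, s_{k+1}, t_0, …, t_k)`: row `j` has entries `−t_{j-1}` at `s_j`,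
`t_j` at `s_{j+1}`, `−s_j` at `t_{j-1}`, `s_{j+1}` at `t_j`, and `0` elsewhere. -/
def jacMat {K : Type*} [Field K] (k : ℕ) (s t : ℕ → K) :
    Matrix (Fin k) (Fin (k + 1) ⊕ Fin (k + 1)) K :=
  Matrix.of fun j i =>
    Sum.elim
      (fun a : Fin (k + 1) =>
        if (a : ℕ) = (j : ℕ) then -t (j : ℕ)
        else if (a : ℕ) = (j : ℕ) + 1 then t ((j : ℕ) + 1) else 0)
      (fun b : Fin (k + 1) =>
        if (b : ℕ) = (j : ℕ) then -s ((j : ℕ) + 1)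
        else if (b : ℕ) = (j : ℕ) + 1 then s ((j : ℕ) + 2) else 0) i

/-- At a point satisfying the relations, where for some `l` one has `t_j ≠ 0` exactly for
`j ≥ l` and `s_j ≠ 0` for `j ≤ l−1` (and no `s_j, t_j` simultaneously zero), the Jacobian
matrix of `f_1, …, f_k` has rank exactly `k`. -/
theorem stmt_7 {K : Type*} [Field K] (k l : ℕ) (s t : ℕ → K)
    (hrel : ∀ j, 1 ≤ j → j ≤ k → s (j + 1) * t j = s j * t (j - 1))
    (hl : l ≤ k + 1)
    (ht : ∀ j ≤ k, (t j ≠ 0 ↔ l ≤ j))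
    (hs : ∀ j, 1 ≤ j → j + 1 ≤ l → s j ≠ 0)
    (hpair : ∀ j, 1 ≤ j → j ≤ k → ¬(s j = 0 ∧ t j = 0)) :
    (jacMat k s t).rank = k := by
  classical
  have hli : LinearIndependent K (jacMat k s t) := by
    refine Fintype.linearIndependent_iff.mpr ?_
    intro c hc
    set d : ℕ → K := fun n => if h : n < k then c ⟨n, h⟩ else 0 with hd
    have hcol : ∀ col, ∑ j : Fin k, c j * jacMat k s t j col = 0 := by
      intro col
      have := congrFun hc col
      simpa [Finset.sum_apply, Pi.smul_apply, smul_eq_mul] using this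
    have hsum : ∀ (a : ℕ) (f : Fin k → K),
        (∑ j : Fin k, if a = (j : ℕ) then f j else 0)
          = if h : a < k then f ⟨a, h⟩ else 0 := by
      intro a f
      by_cases h : a < k
      · rw [dif_pos h, Finset.sum_eq_single (⟨a, h⟩ : Fin k)]
        · simp
        · intro b _ hb
          rw [if_neg]
          intro hab
          exact hb (by ext; simp [hab.symm])
        · simp
      · rw [dif_neg h]
        apply Finset.sum_eq_zero
        intro b _
        rw [if_neg]
        intro hab
        have := b.isLt
        omega
    have hdval : ∀ (n : ℕ) (x : K),
        (if h : n < k then c ⟨n, h⟩ * x else 0) = d n * x := by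
      intro n x
      by_cases h : n < k <;> simp [hd, h]
    -- Equation from column `inl (b+1)`
    have E1 : ∀ b : ℕ, b + 1 ≤ k → (d b - d (b + 1)) * t (b + 1) = 0 := by
      intro b hb
      have h0 := hcol (Sum.inl ⟨b + 1, by omega⟩)
      have hrw : ∀ j : Fin k, c j * jacMat k s t j (Sum.inl ⟨b + 1, by omega⟩)
          = (if b + 1 = (j : ℕ) then c j * (-(t (b + 1))) else 0)
            + (if b = (j : ℕ) then c j * t (b + 1) else 0) := by
        intro j
        simp only [jacMat, Matrix.of_apply, Sum.elim_inl]
        rcases eq_or_ne (b + 1) (j : ℕ) with h1 | h1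
        · rw [if_pos h1, if_pos h1, if_neg (by omega), ← h1]
          ring
        · rw [if_neg h1, if_neg h1]
          rcases eq_or_ne b (j : ℕ) with h2 | h2
          · rw [if_pos (by omega : (b + 1 : ℕ) = (j : ℕ) + 1), if_pos h2, ← h2]
            ring
          · rw [if_neg (by omega : ¬ (b + 1 : ℕ) = (j : ℕ) + 1), if_neg h2]
            ring
      rw [Finset.sum_congr rfl (fun j _ => hrw j), Finset.sum_add_distrib,
        hsum, hsum, hdval, hdval] at h0
      linear_combination h0
    -- Equation from column `inr (b+1)`
    have E2 : ∀ b : ℕ, b + 1 ≤ k → (d b - d (b + 1)) * s (b + 2) = 0 := by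
      intro b hb
      have h0 := hcol (Sum.inr ⟨b + 1, by omega⟩)
      have hrw : ∀ j : Fin k, c j * jacMat k s t j (Sum.inr ⟨b + 1, by omega⟩)
          = (if b + 1 = (j : ℕ) then c j * (-(s (b + 2))) else 0)
            + (if b = (j : ℕ) then c j * s (b + 2) else 0) := by
        intro j
        simp only [jacMat, Matrix.of_apply, Sum.elim_inr]
        rcases eq_or_ne (b + 1) (j : ℕ) with h1 | h1
        · rw [if_pos h1, if_pos h1, if_neg (by omega), ← h1]
          ring
        · rw [if_neg h1, if_neg h1]
          rcases eq_or_ne b (j : ℕ) with h2 | h2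
          · rw [if_pos (by omega : (b + 1 : ℕ) = (j : ℕ) + 1), if_pos h2]
            have : (j : ℕ) + 2 = b + 2 := by omega
            rw [this]
            ring
          · rw [if_neg (by omega : ¬ (b + 1 : ℕ) = (j : ℕ) + 1), if_neg h2]
            ring
      rw [Finset.sum_congr rfl (fun j _ => hrw j), Finset.sum_add_distrib,
        hsum, hsum, hdval, hdval] at h0
      linear_combination h0
    -- Equation from column `inr 0`
    have E0 : 1 ≤ k → d 0 * s 1 = 0 := by
      intro hk
      have h0 := hcol (Sum.inr ⟨0, by omega⟩)
      have hrw : ∀ j : Fin k, c j * jacMat k s t j (Sum.inr ⟨0, by omega⟩)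
          = (if (0 : ℕ) = (j : ℕ) then c j * (-(s 1)) else 0) := by
        intro j
        simp only [jacMat, Matrix.of_apply, Sum.elim_inr]
        rcases eq_or_ne (0 : ℕ) (j : ℕ) with h1 | h1
        · simp [← h1]
        · rw [if_neg h1, if_neg h1, if_neg (by omega)]
          ring
      rw [Finset.sum_congr rfl (fun j _ => hrw j), hsum, hdval] at h0
      linear_combination -h0
    -- Left chain: `d a = 0` for `a + 2 ≤ l`
    have hL : ∀ a : ℕ, a < k → a + 2 ≤ l → d a = 0 := by
      intro a
      induction a with
      | zero =>
        intro hk hla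
        have h0 := E0 (by omega)
        have hs1 : s 1 ≠ 0 := hs 1 le_rfl (by omega)
        rcases mul_eq_zero.mp h0 with h | h
        · exact h
        · exact absurd h hs1
      | succ a ih =>
        intro hk hla
        have h2 := E2 a (by omega)
        have hsne : s (a + 2) ≠ 0 := hs (a + 2) (by omega) (by omega)
        have hda : d a = 0 := ih (by omega) (by omega)
        rcases mul_eq_zero.mp h2 with h | h
        · have := sub_eq_zero.mp h
          rw [← this, hda]
        · exact absurd h hsne
    -- Right chain: `d a = 0` for `l ≤ a + 1`
    have hR : ∀ n a : ℕ, a + n + 1 = k → l ≤ a + 1 → d a = 0 := by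
      intro n
      induction n with
      | zero =>
        intro a ha hla
        have h1 := E1 a (by omega)
        have htk : t (a + 1) ≠ 0 := (ht (a + 1) (by omega)).mpr (by omega)
        have hda1 : d (a + 1) = 0 := by
          have hnk : ¬ (a + 1 < k) := by omega
          simp [hd, hnk]
        rcases mul_eq_zero.mp h1 with h | h
        · have := sub_eq_zero.mp h
          rw [this, hda1]
        · exact absurd h htk
      | succ n ih =>
        intro a ha hla
        have h1 := E1 a (by omega)
        have htk : t (a + 1) ≠ 0 := (ht (a + 1) (by omega)).mpr (by omega)
        have hda1 : d (a + 1) = 0 := ih (a + 1) (by omega) (by omega)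
        rcases mul_eq_zero.mp h1 with h | h
        · have := sub_eq_zero.mp h
          rw [this, hda1]
        · exact absurd h htk
    intro i
    have hdi : d (i : ℕ) = 0 := by
      rcases le_or_gt ((i : ℕ) + 2) l with h | h
      · exact hL i i.isLt h
      · exact hR (k - 1 - (i : ℕ)) i (by omega) (by omega)
    have hik := i.isLt
    simpa [hd, hik] using hdi
  rw [LinearIndependent.rank_matrix (M := jacMat k s t) hli, Fintype.card_fin]
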